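/- arXiv:1007.4389 — 4 statements merged into one kernel-verified Lean document; each statement's English description precedes it below -/
import Mathlib

section
/- It holds that q_0 · p ≤ q_1 ≤ (q_0/(1-p̂)) · p. That is, if each node sends independently with probability at most p̂, then the probability q_1 of exactly one sender is sandwiched between the idle probability q_0 times the cumulative probability p and this quantity divided by (1-p̂). -/
open Finset

/-- If each node `v` of a finite set `V` sends independently with probability
`p v ∈ [0,1]`, `p v ≤ p̂` with `0 < p̂ < 1`, then the probability `q₁` of exactly
one sender is sandwiched: `q₀ · P ≤ q₁ ≤ (q₀/(1-p̂)) · P`, where `P = ∑ p v` is the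
cumulative probability and `q₀ = ∏ (1 - p v)` is the idle probability. -/
theorem idle_success_relation {V : Type*} [Fintype V] [DecidableEq V] (p : V → ℝ) (phat : ℝ)
    (hphat0 : 0 < phat) (hphat1 : phat < 1)
    (hp0 : ∀ v, 0 ≤ p v) (hp1 : ∀ v, p v ≤ 1) (hple : ∀ v, p v ≤ phat) :
    (∏ v, (1 - p v)) * (∑ v, p v) ≤
      (∑ v, p v * ∏ w ∈ univ.erase v, (1 - p w)) ∧
    (∑ v, p v * ∏ w ∈ univ.erase v, (1 - p w)) ≤
      ((∏ v, (1 - p v)) / (1 - phat)) * (∑ v, p v) := by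
  have hprodnn : ∀ v : V, (0:ℝ) ≤ ∏ w ∈ univ.erase v, (1 - p w) := by
    intro v
    exact Finset.prod_nonneg fun w _ => by linarith [hp1 w]
  have hq0 : ∀ v : V, (∏ v, (1 - p v)) = (1 - p v) * ∏ w ∈ univ.erase v, (1 - p w) := by
    intro v
    exact (Finset.mul_prod_erase univ (fun w => 1 - p w) (mem_univ v)).symm
  constructor
  · rw [Finset.mul_sum]
    apply Finset.sum_le_sum
    intro v _
    rw [hq0 v]
    nlinarith [hprodnn v, hp0 v, hp1 v, mul_nonneg (mul_nonneg (hp0 v) (hp0 v)) (hprodnn v)]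
  · rw [Finset.mul_sum]
    apply Finset.sum_le_sum
    intro v _
    have hpv1 : 1 - phat ≤ 1 - p v := by linarith [hple v]
    have hpos : (0:ℝ) < 1 - phat := by linarith
    have key : (∏ w ∈ univ.erase v, (1 - p w)) ≤ (∏ v, (1 - p v)) / (1 - phat) := by
      rw [le_div_iff₀ hpos, hq0 v]
      nlinarith [hprodnn v]
    calc p v * ∏ w ∈ univ.erase v, (1 - p w)
        ≤ p v * ((∏ v, (1 - p v)) / (1 - phat)) :=
          mul_le_mul_of_nonneg_left key (hp0 v)
      _ = (∏ v, (1 - p v)) / (1 - phat) * p v := mul_comm _ _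
end

section
/- The probability of a successful transmission satisfies q_1 = ∑_{v∈V} p_v ∏_{w∈V, w≠v} (1-p_w) ≥ p · exp(-p/(1-p̂)). -/
open Finset

lemma exp_aux {x phat : ℝ} (hphat : phat < 1) (hx0 : 0 ≤ x) (hxle : x ≤ phat) :
    Real.exp (-x / (1 - phat)) ≤ 1 - x := by
  have hc : 0 < 1 - phat := by linarith
  have h1 : x / (1 - phat) + 1 ≤ Real.exp (x / (1 - phat)) :=
    Real.add_one_le_exp _
  have h2 : 0 < Real.exp (-x / (1 - phat)) := Real.exp_pos _
  have h3 : Real.exp (-x / (1 - phat)) * Real.exp (x / (1 - phat)) = 1 := by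
    rw [← Real.exp_add, neg_div, neg_add_cancel, Real.exp_zero]
  have h4 : 0 < 1 + x / (1 - phat) := by positivity
  have h5 : 1 ≤ (1 - x) * (1 + x / (1 - phat)) := by
    rw [div_eq_mul_inv]
    have hinv : (1 - phat)⁻¹ = (1 - phat)⁻¹ := rfl
    have h6 : (1 - x) * (1 + x * (1 - phat)⁻¹) - 1 = x * (phat - x) * (1 - phat)⁻¹ := by
      field_simp
      ring
    nlinarith [mul_nonneg (mul_nonneg hx0 (by linarith : (0:ℝ) ≤ phat - x)) (le_of_lt (inv_pos.mpr hc))]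
  nlinarith [mul_le_mul_of_nonneg_left h1 h2.le]

/-- If each node `v` of a finite set `V` sends independently with probability
`p v ∈ [0,1]`, `p v ≤ p̂` with `0 < p̂ < 1`, then the probability of a successful
transmission satisfies `q₁ = ∑_v p v ∏_{w≠v} (1 - p w) ≥ P · exp(-P/(1-p̂))`,
where `P = ∑ p v` is the cumulative sending probability. -/
theorem success_prob_lower_bound {V : Type*} [Fintype V] [DecidableEq V]
    (p : V → ℝ) (phat : ℝ) (hphat0 : 0 < phat) (hphat1 : phat < 1)
    (hp0 : ∀ v, 0 ≤ p v) (hp1 : ∀ v, p v ≤ 1) (hple : ∀ v, p v ≤ phat) :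
    (∑ v, p v * ∏ w ∈ univ.erase v, (1 - p w)) ≥
      (∑ v, p v) * Real.exp (-(∑ v, p v) / (1 - phat)) := by
  have hc : 0 < 1 - phat := by linarith
  set P := ∑ v, p v with hP
  rw [ge_iff_le, Finset.sum_mul]
  apply Finset.sum_le_sum
  intro v _
  apply mul_le_mul_of_nonneg_left _ (hp0 v)
  -- exp(-P/(1-phat)) ≤ ∏_{w≠v} (1 - p w)
  calc Real.exp (-P / (1 - phat))
      ≤ Real.exp (∑ w ∈ univ.erase v, (-p w / (1 - phat))) := by
        apply Real.exp_le_exp.mpr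
        rw [← Finset.sum_div, ← Finset.sum_neg_distrib]
        have hsub : ∑ w ∈ univ.erase v, p w ≤ P :=
          Finset.sum_le_sum_of_subset_of_nonneg (Finset.erase_subset _ _)
            (fun w _ _ => hp0 w)
        have hnum : ∑ x : V, -p x ≤ ∑ i ∈ univ.erase v, -p i := by
          simp only [Finset.sum_neg_distrib]
          exact neg_le_neg hsub
        exact div_le_div_of_nonneg_right hnum hc.le
    _ = ∏ w ∈ univ.erase v, Real.exp (-p w / (1 - phat)) := by
        rw [Real.exp_sum]
    _ ≤ ∏ w ∈ univ.erase v, (1 - p w) := by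
        apply Finset.prod_le_prod
        · intro w _; exact (Real.exp_pos _).le
        · intro w _; exact exp_aux hphat1 (hp0 w) (hple w)
end

section
/- If Φ is a real number with 1 ≤ Φ ≤ p, then the probability of a successful transmission satisfies q_1 = ∑_{v∈V} p_v ∏_{w∈V, w≠v} (1-p_w) ≤ (1/(1-p̂)) · Φ · exp(-Φ). -/
open Finset

/-- If each node `v` of a finite set `V` sends independently with probability
`p v ∈ [0,1]`, `p v ≤ p̂` with `0 < p̂ < 1`, and `Φ` is a real number with
`1 ≤ Φ ≤ P` where `P = ∑ p v` is the cumulative sending probability, then the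
probability of a successful transmission satisfies
`q₁ = ∑_v p v ∏_{w≠v} (1 - p w) ≤ (1/(1-p̂)) · Φ · exp(-Φ)`. -/
theorem success_prob_upper_bound {V : Type*} [Fintype V] [DecidableEq V]
    (p : V → ℝ) (phat : ℝ) (hphat0 : 0 < phat) (hphat1 : phat < 1)
    (hp0 : ∀ v, 0 ≤ p v) (hp1 : ∀ v, p v ≤ 1) (hple : ∀ v, p v ≤ phat)
    (Φ : ℝ) (hΦ1 : 1 ≤ Φ) (hΦp : Φ ≤ ∑ v, p v) :
    (∑ v, p v * ∏ w ∈ univ.erase v, (1 - p w)) ≤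
      (1 / (1 - phat)) * Φ * Real.exp (-Φ) := by
  set P := ∑ v, p v with hPdef
  have hP1 : (1:ℝ) ≤ P := le_trans hΦ1 hΦp
  have hone : (0:ℝ) < 1 - phat := by linarith
  have hQnn : 0 ≤ ∏ w, (1 - p w) :=
    Finset.prod_nonneg fun w _ => by linarith [hp1 w]
  have h1 : ∀ v : V, (∏ w ∈ univ.erase v, (1 - p w)) ≤
      (1/(1-phat)) * ∏ w, (1 - p w) := by
    intro v
    have hmul : ∏ w, (1 - p w) = (1 - p v) * ∏ w ∈ univ.erase v, (1 - p w) :=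
      (Finset.mul_prod_erase univ _ (mem_univ v)).symm
    have hnn : 0 ≤ ∏ w ∈ univ.erase v, (1 - p w) :=
      Finset.prod_nonneg fun w _ => by linarith [hp1 w]
    rw [hmul, one_div, inv_mul_eq_div, le_div_iff₀ hone]
    have : 1 - phat ≤ 1 - p v := by linarith [hple v]
    nlinarith
  have step1 : (∑ v, p v * ∏ w ∈ univ.erase v, (1 - p w)) ≤
      (1/(1-phat)) * P * ∏ w, (1 - p w) := by
    calc ∑ v, p v * ∏ w ∈ univ.erase v, (1 - p w)
        ≤ ∑ v, p v * ((1/(1-phat)) * ∏ w, (1 - p w)) :=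
          Finset.sum_le_sum fun v _ => mul_le_mul_of_nonneg_left (h1 v) (hp0 v)
      _ = (1/(1-phat)) * P * ∏ w, (1 - p w) := by
          rw [← Finset.sum_mul]; ring
  have hprod : ∏ w, (1 - p w) ≤ Real.exp (-P) := by
    calc ∏ w, (1 - p w) ≤ ∏ w, Real.exp (-p w) := by
          apply Finset.prod_le_prod
          · intro w _; linarith [hp1 w]
          · intro w _; linarith [Real.add_one_le_exp (-p w)]
      _ = Real.exp (-P) := by
          rw [← Real.exp_sum, hPdef, ← Finset.sum_neg_distrib]
  have hmono : P * Real.exp (-P) ≤ Φ * Real.exp (-Φ) := by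
    have h : P ≤ Φ * Real.exp (P - Φ) := by
      have hexp := Real.add_one_le_exp (P - Φ)
      nlinarith [mul_le_mul_of_nonneg_left hexp (by linarith : (0:ℝ) ≤ Φ)]
    calc P * Real.exp (-P) ≤ (Φ * Real.exp (P - Φ)) * Real.exp (-P) :=
          mul_le_mul_of_nonneg_right h (Real.exp_pos _).le
      _ = Φ * Real.exp (-Φ) := by
          rw [mul_assoc, ← Real.exp_add]; ring_nf
  calc (∑ v, p v * ∏ w ∈ univ.erase v, (1 - p w))
      ≤ (1/(1-phat)) * P * ∏ w, (1 - p w) := step1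
    _ ≤ (1/(1-phat)) * P * Real.exp (-P) := by
        apply mul_le_mul_of_nonneg_left hprod
        positivity
    _ = (1/(1-phat)) * (P * Real.exp (-P)) := by ring
    _ ≤ (1/(1-phat)) * (Φ * Real.exp (-Φ)) := by
        apply mul_le_mul_of_nonneg_left hmono
        positivity
    _ = (1 / (1 - phat)) * Φ * Real.exp (-Φ) := by ring
end

section
/- Let T₀, k, ℓ be natural numbers with T₀ ≥ 1 and let f be a nonnegative real number. If ∑_{i=0}^{ℓ} max(T₀ + 2i - k, 1) ≤ f, then ℓ ≤ k/2 + √f (as an inequality of real numbers). -/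
lemma sum_odd_sq (n : ℕ) : ∑ j ∈ Finset.range n, ((2 * j + 1 : ℕ) : ℝ) = (n : ℝ) ^ 2 := by
  induction n with
  | zero => simp
  | succ n ih => rw [Finset.sum_range_succ, ih]; push_cast; ring

/-- If `T₀ ≥ 1` and `∑_{i=0}^{ℓ} max(T₀ + 2i - k, 1) ≤ f` for a nonnegative real
`f`, then `ℓ ≤ k/2 + √f` (as real numbers). -/
theorem window_increase_bound (T₀ k ℓ : ℕ) (hT : 1 ≤ T₀) (f : ℝ) (hf : 0 ≤ f)
    (h : (∑ i ∈ Finset.range (ℓ + 1),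
        ((max ((T₀ : ℤ) + 2 * (i : ℤ) - (k : ℤ)) 1 : ℤ) : ℝ)) ≤ f) :
    (ℓ : ℝ) ≤ (k : ℝ) / 2 + Real.sqrt f := by
  have hs := Real.sqrt_nonneg f
  set c := (k + 1) / 2 with hc
  have h2c : k ≤ 2 * c := by omega
  have hc2 : 2 * c ≤ k + 1 := by omega
  rcases lt_or_ge ℓ c with hl | hl
  · have : 2 * ℓ ≤ k := by omega
    have : (2 * ℓ : ℝ) ≤ (k : ℝ) := by exact_mod_cast this
    linarith
  · set m := ℓ - c with hm
    have hlm : ℓ = c + m := by omega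
    -- lower bound: sum over Ico c (ℓ+1) of (2(i-c)+1)
    have key : ((m : ℝ) + 1) ^ 2 ≤
        ∑ i ∈ Finset.range (ℓ + 1),
          ((max ((T₀ : ℤ) + 2 * (i : ℤ) - (k : ℤ)) 1 : ℤ) : ℝ) := by
      have hsub : Finset.Ico c (ℓ + 1) ⊆ Finset.range (ℓ + 1) := by
        intro x hx
        simp only [Finset.mem_Ico, Finset.mem_range] at *
        omega
      have hnn : ∀ i ∈ Finset.range (ℓ + 1),
          (0 : ℝ) ≤ ((max ((T₀ : ℤ) + 2 * (i : ℤ) - (k : ℤ)) 1 : ℤ) : ℝ) := by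
        intro i _
        have : (1 : ℤ) ≤ max ((T₀ : ℤ) + 2 * (i : ℤ) - (k : ℤ)) 1 := le_max_right _ _
        exact_mod_cast this.trans' (by norm_num)
      have h1 : ∑ i ∈ Finset.Ico c (ℓ + 1),
            ((max ((T₀ : ℤ) + 2 * (i : ℤ) - (k : ℤ)) 1 : ℤ) : ℝ) ≤
          ∑ i ∈ Finset.range (ℓ + 1),
            ((max ((T₀ : ℤ) + 2 * (i : ℤ) - (k : ℤ)) 1 : ℤ) : ℝ) :=
        Finset.sum_le_sum_of_subset_of_nonneg hsub (fun i hi _ => hnn i hi)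
      have h2 : ∑ i ∈ Finset.Ico c (ℓ + 1), ((2 * (i - c) + 1 : ℕ) : ℝ) ≤
          ∑ i ∈ Finset.Ico c (ℓ + 1),
            ((max ((T₀ : ℤ) + 2 * (i : ℤ) - (k : ℤ)) 1 : ℤ) : ℝ) := by
        apply Finset.sum_le_sum
        intro i hi
        simp only [Finset.mem_Ico] at hi
        have hic : c ≤ i := hi.1
        have hint : ((2 * (i - c) + 1 : ℕ) : ℤ) ≤ max ((T₀ : ℤ) + 2 * (i : ℤ) - (k : ℤ)) 1 := by
          have : ((2 * (i - c) + 1 : ℕ) : ℤ) ≤ (T₀ : ℤ) + 2 * (i : ℤ) - (k : ℤ) := by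
            push_cast [Nat.cast_sub hic]
            have : (1 : ℤ) ≤ (T₀ : ℤ) := by exact_mod_cast hT
            have hk : (k : ℤ) ≤ 2 * (c : ℤ) := by exact_mod_cast h2c
            linarith
          exact this.trans (le_max_left _ _)
        exact_mod_cast hint
      have h3 : ∑ i ∈ Finset.Ico c (ℓ + 1), ((2 * (i - c) + 1 : ℕ) : ℝ) = ((m : ℝ) + 1) ^ 2 := by
        rw [Finset.sum_Ico_eq_sum_range]
        have hlen : ℓ + 1 - c = m + 1 := by omega
        rw [hlen]
        have : ∀ j ∈ Finset.range (m + 1),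
            ((2 * (c + j - c) + 1 : ℕ) : ℝ) = ((2 * j + 1 : ℕ) : ℝ) := by
          intro j _; congr 1; omega
        rw [Finset.sum_congr rfl this, sum_odd_sq]
        push_cast; ring
      linarith
    have hsq : (m : ℝ) + 1 ≤ Real.sqrt f := by
      have := Real.sqrt_le_sqrt (key.trans h)
      rwa [Real.sqrt_sq (by positivity)] at this
    have hcr : 2 * (c : ℝ) ≤ (k : ℝ) + 1 := by exact_mod_cast hc2
    have : (ℓ : ℝ) = (c : ℝ) + (m : ℝ) := by exact_mod_cast congrArg (Nat.cast (R := ℝ)) hlm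
    linarith
end
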